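/- Let K > 0. Then there exist C > 0 and m₀ ∈ ℕ such that for all m ≥ m₀, n = ±(2m+1), and every z ∈ ℂ with |z| ≤ K/m, the quantity σ⁺₀(n,z) is well defined and |σ⁺₀(n,z)/σ⁺₀(n,0) - 1| ≤ C·(log m)/m. -/

import Mathlib

open Finset

noncomputable section

/-- Coefficient function `p`: `p(2) = A`, `p(-2) = a`. -/
def pc (a A : ℂ) (w : ℤ) : ℂ := if w = 2 then A else if w = -2 then a else 0

/-- Coefficient function `q`: `q(2) = B`, `q(-2) = b`. -/
def qc (b B : ℂ) (w : ℤ) : ℂ := if w = 2 then B else if w = -2 then b else 0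

/-- Vertex `j_k = -n + x_1 + ⋯ + x_k` of a walk `x` starting at `-n`. -/
def vtx (n : ℤ) (x : List ℤ) (k : ℕ) : ℤ := -n + (x.take k).sum

/-- An admissible walk from `-n` to `n`: odd length, steps in `{-2, 2}`, total sum `2n`,
and the vertices `j_k` (for `1 ≤ k < length`) satisfy `j_k ≠ n` for odd `k` and
`j_k ≠ -n` for even `k`. -/
def AdmX (n : ℤ) (x : List ℤ) : Prop :=
  Odd x.length ∧ (∀ s ∈ x, s = 2 ∨ s = -2) ∧ x.sum = 2 * n ∧
    ∀ k : ℕ, 1 ≤ k → k < x.length →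
      (Odd k → vtx n x k ≠ n) ∧ (Even k → vtx n x k ≠ -n)

/-- `X_n(r)`: admissible walks from `-n` to `n` with exactly `r` negative steps if `n > 0`,
resp. exactly `r` positive steps if `n < 0`. -/
def Xw (n : ℤ) (r : ℕ) : Set (List ℤ) :=
  {x | AdmX n x ∧ (0 < n → x.count (-2) = r) ∧ (n < 0 → x.count 2 = r)}

/-- Numerator of `h⁺`: `q(x_1) p(x_2) q(x_3) ⋯ p(x_{2ν}) q(x_{2ν+1})`. -/
def numX (a A b B : ℂ) (x : List ℤ) : ℂ :=
  ∏ t ∈ Finset.range x.length,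
    (if t % 2 = 0 then qc b B (x.getD t 0) else pc a A (x.getD t 0))

/-- Denominator of `h⁺`: the product of the factors `(n - j_k + z)` for odd `k` and
`(n + j_k + z)` for even `k`, `1 ≤ k ≤ 2ν`. -/
def denX (n : ℤ) (x : List ℤ) (z : ℂ) : ℂ :=
  ∏ k ∈ Finset.Icc 1 (x.length - 1),
    (if k % 2 = 1 then ((n : ℂ) - (vtx n x k : ℂ) + z) else ((n : ℂ) + (vtx n x k : ℂ) + z))

/-- `h⁺(x, z)`. -/
def hX (a A b B : ℂ) (n : ℤ) (x : List ℤ) (z : ℂ) : ℂ := numX a A b B x / denX n x z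

/-- `σ⁺_r(n, z) = ∑_{x ∈ X_n(r)} h⁺(x, z)`. -/
def sigmaX (a A b B : ℂ) (n : ℤ) (r : ℕ) (z : ℂ) : ℂ :=
  ∑' x : Xw n r, hX a A b B n (x : List ℤ) z

/-- `β⁺_n(z) = ∑_{r=0}^∞ σ⁺_r(n, z)`. -/
def betaX (a A b B : ℂ) (n : ℤ) (z : ℂ) : ℂ := ∑' r : ℕ, sigmaX a A b B n r z

/-! ### Auxiliary lemmas -/

lemma vtx_replicate (n : ℤ) (L k : ℕ) (e : ℤ) (hk : k ≤ L) :
    vtx n (List.replicate L e) k = -n + k * e := by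
  rw [vtx, List.take_replicate]
  simp [min_eq_left hk, List.sum_replicate]

lemma Xw_pos (m : ℕ) (n : ℤ) (hn : n = 2 * m + 1) :
    Xw n 0 = {List.replicate (2 * m + 1) 2} := by
  ext x
  simp only [Set.mem_singleton_iff, Xw, Set.mem_setOf_eq]
  constructor
  · rintro ⟨⟨hodd, hmem, hsum, -⟩, hcnt, -⟩
    have hcnt' := hcnt (by omega)
    have hall : ∀ s ∈ x, s = 2 := by
      intro s hs
      rcases hmem s hs with h | h
      · exact h
      · exfalso; subst h
        exact absurd (List.count_pos_iff.mpr hs) (by omega)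
    have hx2 : x = List.replicate x.length 2 :=
      List.eq_replicate_iff.mpr ⟨rfl, hall⟩
    have hsum2 : x.sum = (x.length : ℤ) * 2 := by
      rw [hx2]; simp [List.sum_replicate]
    have : (x.length : ℤ) = 2 * m + 1 := by omega
    rw [hx2]; congr 1; omega
  · rintro rfl
    refine ⟨⟨?_, ?_, ?_, ?_⟩, ?_, ?_⟩
    · simp
    · intro s hs; left; exact List.eq_of_mem_replicate hs
    · simp [List.sum_replicate]; omega
    · intro k hk1 hk2
      simp only [List.length_replicate] at hk2
      rw [vtx_replicate n _ k 2 (by omega)]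
      exact ⟨fun _ => by omega, fun _ => by omega⟩
    · intro _; simp [List.count_replicate]
    · intro h; omega

lemma Xw_neg (m : ℕ) (n : ℤ) (hn : n = -(2 * m + 1)) :
    Xw n 0 = {List.replicate (2 * m + 1) (-2)} := by
  ext x
  simp only [Set.mem_singleton_iff, Xw, Set.mem_setOf_eq]
  constructor
  · rintro ⟨⟨hodd, hmem, hsum, -⟩, -, hcnt⟩
    have hcnt' := hcnt (by omega)
    have hall : ∀ s ∈ x, s = -2 := by
      intro s hs
      rcases hmem s hs with h | h
      · exfalso; subst h
        exact absurd (List.count_pos_iff.mpr hs) (by omega)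
      · exact h
    have hx2 : x = List.replicate x.length (-2) :=
      List.eq_replicate_iff.mpr ⟨rfl, hall⟩
    have hsum2 : x.sum = (x.length : ℤ) * (-2) := by
      rw [hx2]; simp [List.sum_replicate]
    have : (x.length : ℤ) = 2 * m + 1 := by omega
    rw [hx2]; congr 1; omega
  · rintro rfl
    refine ⟨⟨?_, ?_, ?_, ?_⟩, ?_, ?_⟩
    · simp
    · intro s hs; right; exact List.eq_of_mem_replicate hs
    · simp [List.sum_replicate]; omega
    · intro k hk1 hk2
      simp only [List.length_replicate] at hk2
      rw [vtx_replicate n _ k (-2) (by omega)]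
      exact ⟨fun _ => by omega, fun _ => by omega⟩
    · intro h; omega
    · intro _; simp [List.count_replicate]

/-- factor values: `cfac n e k = if odd then 2n - k e else k e` -/
def cfac (n : ℤ) (e : ℤ) (k : ℕ) : ℤ := if k % 2 = 1 then 2 * n - k * e else k * e

lemma denX_replicate (n : ℤ) (m : ℕ) (e : ℤ) (z : ℂ) :
    denX n (List.replicate (2 * m + 1) e) z
      = ∏ k ∈ Finset.Icc 1 (2 * m), ((cfac n e k : ℂ) + z) := by
  rw [denX]
  simp only [List.length_replicate]
  refine Finset.prod_congr (by congr 1) ?_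
  intro k hk
  simp only [Finset.mem_Icc] at hk
  rw [vtx_replicate n _ k e (by omega)]
  rcases Nat.even_or_odd k with he | ho
  · have : k % 2 = 0 := Nat.even_iff.mp he
    simp only [this]
    norm_num [cfac, this]
  · have : k % 2 = 1 := Nat.odd_iff.mp ho
    simp only [this]
    norm_num [cfac, this]
    push_cast
    ring

lemma numX_replicate_ne (a A b B : ℂ) (ha : a ≠ 0) (hA : A ≠ 0) (hb : b ≠ 0) (hB : B ≠ 0)
    (L : ℕ) (e : ℤ) (he : e = 2 ∨ e = -2) :
    numX a A b B (List.replicate L e) ≠ 0 := by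
  rw [numX, Finset.prod_ne_zero_iff]
  intro t ht
  simp only [Finset.mem_range, List.length_replicate] at ht
  have hg : (List.replicate L e).getD t 0 = e := by
    rw [List.getD_eq_getElem?_getD]; simp [List.getElem?_replicate, ht]
  rw [hg]
  rcases he with rfl | rfl <;> rcases Nat.decEq (t % 2) 0 with h | h <;>
    simp_all [pc, qc]

/-- Harmonic bound: `∑_{k=1}^n 1/k ≤ 1 + log n`. -/
lemma harmonic_le_log (n : ℕ) (hn : 1 ≤ n) :
    ∑ k ∈ Finset.Icc 1 n, (1 : ℝ) / k ≤ 1 + Real.log n := by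
  induction n with
  | zero => omega
  | succ n ih =>
    rcases Nat.eq_or_lt_of_le hn with h | h
    · simp [← h]
    · have hn1 : 1 ≤ n := by omega
      have hstep : (1 : ℝ) / (n + 1) ≤ Real.log (n + 1) - Real.log n := by
        have hnpos : (0 : ℝ) < n := by exact_mod_cast hn1
        have h1 : Real.log ((n : ℝ) / (n + 1)) ≤ (n : ℝ) / (n + 1) - 1 :=
          Real.log_le_sub_one_of_pos (by positivity)
        rw [Real.log_div (by positivity) (by positivity)] at h1
        have : (n : ℝ) / (n + 1) - 1 = -(1 / (n + 1)) := by field_simp; ring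
        rw [this] at h1
        linarith
      rw [Finset.sum_Icc_succ_top (by omega)]
      have := ih hn1
      push_cast
      push_cast at hstep
      linarith

lemma sum_reflect (m : ℕ) :
    ∑ k ∈ Finset.Icc 1 (2*m), (1:ℝ) / (2*(2*(m:ℝ)+1) - 2*k)
      = ∑ k ∈ Finset.Icc 1 (2*m), (1:ℝ) / (2*(k:ℝ)) := by
  refine Finset.sum_nbij' (fun k => 2*m+1-k) (fun k => 2*m+1-k) ?_ ?_ ?_ ?_ ?_
  · intro a ha; simp only [Finset.mem_Icc] at *; omega
  · intro a ha; simp only [Finset.mem_Icc] at *; omega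
  · intro a ha; simp only [Finset.mem_Icc] at *; omega
  · intro a ha; simp only [Finset.mem_Icc] at *; omega
  · intro a ha
    simp only [Finset.mem_Icc] at ha
    have : ((2*m+1-a : ℕ) : ℝ) = 2*(m:ℝ)+1-a := by
      push_cast [Nat.cast_sub (by omega : a ≤ 2*m+1)]; ring
    rw [this]
    congr 1
    ring

lemma sum_inv_c_le (m : ℕ) (hm : 1 ≤ m) (c : ℕ → ℝ)
    (hc : ∀ k ∈ Finset.Icc 1 (2*m), c k = 2*k ∨ c k = 2*(2*(m:ℝ)+1) - 2*k) :
    ∑ k ∈ Finset.Icc 1 (2*m), 1 / c k ≤ 1 + Real.log (2*m) := by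
  have key : ∀ k ∈ Finset.Icc 1 (2*m),
      1 / c k ≤ 1 / (2*(k:ℝ)) + 1 / (2*(2*(m:ℝ)+1) - 2*k) := by
    intro k hk
    simp only [Finset.mem_Icc] at hk
    have hk1 : (1:ℝ) ≤ (k:ℝ) := by exact_mod_cast hk.1
    have h1 : (0:ℝ) < 2*(k:ℝ) := by linarith
    have h2 : (0:ℝ) < 2*(2*(m:ℝ)+1) - 2*k := by
      have : (k:ℝ) ≤ 2*m := by exact_mod_cast hk.2
      linarith
    rcases hc k (Finset.mem_Icc.mpr hk) with h | h
    · rw [h]; have := le_of_lt (div_pos one_pos h2); linarith [this]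
    · rw [h]; have := le_of_lt (div_pos one_pos h1); linarith [this]
  calc ∑ k ∈ Finset.Icc 1 (2*m), 1 / c k
      ≤ ∑ k ∈ Finset.Icc 1 (2*m), (1 / (2*(k:ℝ)) + 1 / (2*(2*(m:ℝ)+1) - 2*k)) :=
        Finset.sum_le_sum key
    _ = ∑ k ∈ Finset.Icc 1 (2*m), 1 / (2*(k:ℝ))
        + ∑ k ∈ Finset.Icc 1 (2*m), 1 / (2*(2*(m:ℝ)+1) - 2*k) := Finset.sum_add_distrib
    _ = ∑ k ∈ Finset.Icc 1 (2*m), 1 / (k:ℝ) := by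
        rw [sum_reflect]
        rw [← Finset.sum_add_distrib]
        refine Finset.sum_congr rfl fun k hk => ?_
        simp only [Finset.mem_Icc] at hk
        have : (0:ℝ) < k := by exact_mod_cast hk.1
        have hne : (k:ℝ) ≠ 0 := by positivity
        field_simp
        norm_num
    _ ≤ 1 + Real.log (2*m) := by
        have := harmonic_le_log (2*m) (by omega)
        push_cast at this ⊢
        linarith

lemma norm_prod_one_add_sub_one_le {ι : Type*} (s : Finset ι) (w : ι → ℂ) :
    ‖∏ i ∈ s, (1 + w i) - 1‖ ≤ ∏ i ∈ s, (1 + ‖w i‖) - 1 := by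
  classical
  induction s using Finset.induction_on with
  | empty => simp
  | insert j s ha ih =>
    rw [Finset.prod_insert ha, Finset.prod_insert ha]
    have key : (1 + w j) * ∏ i ∈ s, (1 + w i) - 1
        = (1 + w j) * (∏ i ∈ s, (1 + w i) - 1) + w j := by ring
    rw [key]
    calc ‖(1 + w j) * (∏ i ∈ s, (1 + w i) - 1) + w j‖
        ≤ ‖1 + w j‖ * ‖∏ i ∈ s, (1 + w i) - 1‖ + ‖w j‖ := by
          refine le_trans (norm_add_le _ _) ?_; rw [norm_mul]
      _ ≤ (1 + ‖w j‖) * (∏ i ∈ s, (1 + ‖w i‖) - 1) + ‖w j‖ := by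
          have h1 : ‖(1 : ℂ) + w j‖ ≤ 1 + ‖w j‖ := by
            refine le_trans (norm_add_le _ _) ?_; simp
          have h2 : (0:ℝ) ≤ ∏ i ∈ s, (1 + ‖w i‖) - 1 := by
            have : (1:ℝ) ≤ ∏ i ∈ s, (1 + ‖w i‖) := by
              have := Finset.prod_le_prod (f := fun _ : ι => (1:ℝ))
                (g := fun i => 1 + ‖w i‖) (s := s) (fun i _ => zero_le_one)
                (fun i _ => by simpa using norm_nonneg (w i))
              simpa using this
            linarith
          have := mul_le_mul h1 ih (norm_nonneg _) (by positivity)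
          linarith
      _ = (1 + ‖w j‖) * ∏ i ∈ s, (1 + ‖w i‖) - 1 := by ring

lemma prod_one_add_le_exp {ι : Type*} (s : Finset ι) (e : ι → ℝ) (he : ∀ i ∈ s, 0 ≤ e i) :
    ∏ i ∈ s, (1 + e i) ≤ Real.exp (∑ i ∈ s, e i) := by
  rw [Real.exp_sum]
  exact Finset.prod_le_prod (fun i hi => by have := he i hi; positivity)
    (fun i hi => by have := Real.add_one_le_exp (e i); linarith)

lemma exp_sub_one_le (S : ℝ) (h0 : 0 ≤ S) (h1 : S ≤ 1) : Real.exp S - 1 ≤ 3 * S := by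
  have h2 : Real.exp S - 1 ≤ S * Real.exp S := by
    have hpos := Real.exp_pos S
    have : (1 - S) * Real.exp S ≤ 1 := by
      have := mul_le_mul_of_nonneg_right (Real.add_one_le_exp (-S)) hpos.le
      rwa [← Real.exp_add, neg_add_cancel, Real.exp_zero, neg_add_eq_sub] at this
    nlinarith
  have h3 : Real.exp S ≤ Real.exp 1 := Real.exp_le_exp.mpr h1
  have h4 : Real.exp 1 < 3 := by
    have := Real.exp_one_lt_d9; linarith
  nlinarith

lemma norm_prod_one_add_sub_one_le' {ι : Type*} (s : Finset ι) (w : ι → ℂ)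
    (hS : ∑ i ∈ s, ‖w i‖ ≤ 1) :
    ‖∏ i ∈ s, (1 + w i) - 1‖ ≤ 3 * ∑ i ∈ s, ‖w i‖ := by
  have h0 : 0 ≤ ∑ i ∈ s, ‖w i‖ := Finset.sum_nonneg fun i _ => norm_nonneg _
  calc ‖∏ i ∈ s, (1 + w i) - 1‖ ≤ ∏ i ∈ s, (1 + ‖w i‖) - 1 :=
        norm_prod_one_add_sub_one_le s w
    _ ≤ Real.exp (∑ i ∈ s, ‖w i‖) - 1 := by
        have := prod_one_add_le_exp s (fun i => ‖w i‖) (fun i _ => norm_nonneg _)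
        linarith
    _ ≤ 3 * ∑ i ∈ s, ‖w i‖ := exp_sub_one_le _ h0 hS

lemma exists_m0 (c : ℝ) (hc : 0 < c) : ∃ m₀ : ℕ, ∀ m : ℕ, m₀ ≤ m → Real.log m ≤ c * m := by
  have h := Real.isLittleO_log_id_atTop.def hc
  rw [Filter.eventually_atTop] at h
  obtain ⟨x₀, hx₀⟩ := h
  refine ⟨⌈max x₀ 1⌉₊, fun m hm => ?_⟩
  have hm' : x₀ ≤ (m : ℝ) :=
    le_trans (le_max_left _ _) (Nat.le_of_ceil_le hm)
  have hm1 : (1:ℝ) ≤ m :=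
    le_trans (le_max_right _ _) (Nat.le_of_ceil_le hm)
  have := hx₀ m hm'
  simp only [id_eq, Real.norm_eq_abs] at this
  have hlog0 : 0 ≤ Real.log m := Real.log_nonneg hm1
  calc Real.log m = |Real.log m| := (abs_of_nonneg hlog0).symm
    _ ≤ c * |(m:ℝ)| := this
    _ = c * m := by rw [abs_of_nonneg (by linarith)]

/-- The main quantitative estimate on products `∏ c_k / ∏ (c_k + z)`. -/
lemma main_est (K : ℝ) (hK : 0 < K) :
    ∃ C > (0:ℝ), ∃ m₀ : ℕ, 3 ≤ m₀ ∧ ∀ m : ℕ, m₀ ≤ m → ∀ c : ℕ → ℤ,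
      (∀ k ∈ Finset.Icc 1 (2*m), (|c k| : ℤ) = 2*k ∨ (|c k| : ℤ) = 2*(2*(m:ℤ)+1) - 2*k) →
      ∀ z : ℂ, ‖z‖ ≤ K / m →
      (∀ k ∈ Finset.Icc 1 (2*m), ((c k : ℂ) + z) ≠ 0) ∧
      ‖(∏ k ∈ Finset.Icc 1 (2*m), (c k : ℂ)) / (∏ k ∈ Finset.Icc 1 (2*m), ((c k : ℂ) + z)) - 1‖
        ≤ C * Real.log m / m := by
  obtain ⟨m₁, hm₁⟩ := exists_m0 (1 / (6 * K)) (by positivity)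
  refine ⟨18 * K, by positivity, max (max 3 m₁) ⌈K⌉₊, le_trans (le_max_left 3 m₁) (le_max_left _ _), ?_⟩
  intro m hm c hc z hz
  have hm3 : 3 ≤ m := le_trans (le_trans (le_max_left 3 m₁) (le_max_left _ _)) hm
  have hmK : K ≤ m := le_trans (Nat.le_of_ceil_le (le_trans (le_max_right _ _) hm)) le_rfl
  have hm1 : m₁ ≤ m := le_trans (le_trans (le_max_right 3 m₁) (le_max_left _ _)) hm
  have hmpos : (0:ℝ) < m := by positivity
  have hz1 : ‖z‖ ≤ 1 := le_trans hz (by rw [div_le_one hmpos]; exact hmK)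
  -- basic facts about the |c k|
  have habs : ∀ k ∈ Finset.Icc 1 (2*m), (2:ℝ) ≤ |(c k : ℝ)| := by
    intro k hk
    simp only [Finset.mem_Icc] at hk
    rcases hc k (Finset.mem_Icc.mpr hk) with h | h <;>
    · have : (2:ℤ) ≤ |c k| := by omega
      have h2 : ((|c k| : ℤ) : ℝ) = |(c k : ℝ)| := by push_cast; rfl
      calc (2:ℝ) ≤ ((|c k| : ℤ) : ℝ) := by exact_mod_cast this
        _ = |(c k : ℝ)| := h2
  -- lower bound on denominators
  have hden : ∀ k ∈ Finset.Icc 1 (2*m), |(c k : ℝ)| / 2 ≤ ‖(c k : ℂ) + z‖ := by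
    intro k hk
    have h2 := habs k hk
    have : ‖((c k : ℤ) : ℂ)‖ - ‖z‖ ≤ ‖(c k : ℂ) + z‖ := by
      have := norm_sub_norm_le ((c k : ℂ)) (-z)
      simpa [sub_neg_eq_add] using this
    have hnc : ‖((c k : ℤ) : ℂ)‖ = |(c k : ℝ)| := by
      rw [show ((c k : ℤ) : ℂ) = ((c k : ℝ) : ℂ) by push_cast; rfl,
        Complex.norm_real, Real.norm_eq_abs]
    rw [hnc] at this
    linarith
  have hne : ∀ k ∈ Finset.Icc 1 (2*m), ((c k : ℂ) + z) ≠ 0 := by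
    intro k hk h0
    have := hden k hk
    have h2 := habs k hk
    rw [h0, norm_zero] at this
    linarith
  refine ⟨hne, ?_⟩
  -- rewrite ratio as product of (1 + w k)
  set w : ℕ → ℂ := fun k => -z / ((c k : ℂ) + z) with hw
  have hprod : (∏ k ∈ Finset.Icc 1 (2*m), (c k : ℂ)) / (∏ k ∈ Finset.Icc 1 (2*m), ((c k : ℂ) + z))
      = ∏ k ∈ Finset.Icc 1 (2*m), (1 + w k) := by
    rw [← Finset.prod_div_distrib]
    refine Finset.prod_congr rfl fun k hk => ?_
    have := hne k hk
    rw [hw]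
    field_simp
    ring
  -- bound the sum of ‖w k‖
  have hwb : ∀ k ∈ Finset.Icc 1 (2*m), ‖w k‖ ≤ 2 * ‖z‖ / |(c k : ℝ)| := by
    intro k hk
    have h2 := habs k hk
    have hd := hden k hk
    rw [hw]
    simp only [norm_div, norm_neg]
    rw [div_le_div_iff₀ (lt_of_lt_of_le (by linarith) hd) (by linarith)]
    calc ‖z‖ * |(c k : ℝ)| = 2 * ‖z‖ * (|(c k : ℝ)|/2) := by ring
      _ ≤ 2 * ‖z‖ * ‖(c k : ℂ) + z‖ := by
          have h0 : (0:ℝ) ≤ 2 * ‖z‖ := by positivity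
          exact mul_le_mul_of_nonneg_left hd h0
  have hsum : ∑ k ∈ Finset.Icc 1 (2*m), ‖w k‖ ≤ 2 * ‖z‖ * (1 + Real.log (2*m)) := by
    calc ∑ k ∈ Finset.Icc 1 (2*m), ‖w k‖
        ≤ ∑ k ∈ Finset.Icc 1 (2*m), 2 * ‖z‖ / |(c k : ℝ)| := Finset.sum_le_sum hwb
      _ = 2 * ‖z‖ * ∑ k ∈ Finset.Icc 1 (2*m), 1 / |(c k : ℝ)| := by
          rw [Finset.mul_sum]
          exact Finset.sum_congr rfl fun k _ => by ring
      _ ≤ 2 * ‖z‖ * (1 + Real.log (2*m)) := by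
          have hcc : ∀ k ∈ Finset.Icc 1 (2*m),
              |(c k : ℝ)| = 2*(k:ℝ) ∨ |(c k : ℝ)| = 2*(2*(m:ℝ)+1) - 2*(k:ℝ) := by
            intro k hk
            rcases hc k hk with h | h
            · left
              rw [← Int.cast_abs, h]; push_cast; ring
            · right
              rw [← Int.cast_abs, h]; push_cast; ring
          have := sum_inv_c_le m (by omega) (fun k => |(c k : ℝ)|) hcc
          have hz0 : (0:ℝ) ≤ 2 * ‖z‖ := by positivity
          exact mul_le_mul_of_nonneg_left this hz0
  -- numeric bound on the sum
  have hlog1 : (1:ℝ) ≤ Real.log m := by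
    have h3 : (Real.exp 1 : ℝ) ≤ m := by
      have := Real.exp_one_lt_d9
      have : Real.exp 1 ≤ 3 := by linarith
      calc Real.exp 1 ≤ 3 := this
        _ ≤ m := by exact_mod_cast hm3
    calc (1:ℝ) = Real.log (Real.exp 1) := (Real.log_exp 1).symm
      _ ≤ Real.log m := Real.log_le_log (Real.exp_pos 1) h3
  have hlog2m : Real.log (2*(m:ℝ)) = Real.log 2 + Real.log m := by
    rw [Real.log_mul (by norm_num) (by positivity)]
  have hlog2 : Real.log 2 ≤ 1 := by
    calc Real.log 2 ≤ Real.log (Real.exp 1) := by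
          refine Real.log_le_log (by norm_num) ?_
          have := Real.exp_one_gt_d9
          linarith
      _ = 1 := Real.log_exp 1
  have hSbound : ∑ k ∈ Finset.Icc 1 (2*m), ‖w k‖ ≤ 6 * K * Real.log m / m := by
    calc ∑ k ∈ Finset.Icc 1 (2*m), ‖w k‖ ≤ 2 * ‖z‖ * (1 + Real.log (2*m)) := hsum
      _ ≤ 2 * (K/m) * (3 * Real.log m) := by
          have hb : (1:ℝ) + Real.log (2*m) ≤ 3 * Real.log m := by
            rw [hlog2m]; linarith
          have h0 : (0:ℝ) ≤ 1 + Real.log (2*m) := by rw [hlog2m]; nlinarith [Real.log_nonneg (by norm_num : (1:ℝ) ≤ 2)]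
          have hz0 : (0:ℝ) ≤ ‖z‖ := norm_nonneg z
          nlinarith
      _ = 6 * K * Real.log m / m := by ring
  have hS1 : ∑ k ∈ Finset.Icc 1 (2*m), ‖w k‖ ≤ 1 := by
    have := hm₁ m hm1
    calc ∑ k ∈ Finset.Icc 1 (2*m), ‖w k‖ ≤ 6 * K * Real.log m / m := hSbound
      _ ≤ 6 * K * ((1/(6*K)) * m) / m := by
          have hstep := hm₁ m hm1
          gcongr
      _ = 1 := by field_simp
  rw [hprod]
  calc ‖∏ k ∈ Finset.Icc 1 (2*m), (1 + w k) - 1‖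
      ≤ 3 * ∑ k ∈ Finset.Icc 1 (2*m), ‖w k‖ := norm_prod_one_add_sub_one_le' _ _ hS1
    _ ≤ 3 * (6 * K * Real.log m / m) := by linarith
    _ = (18 * K) * Real.log m / m := by ring

/-- For every `K > 0` there are `C > 0` and `m₀` such that for all `m ≥ m₀`,
`n = ±(2m+1)`, and `|z| ≤ K/m`, the quantity `σ⁺₀(n, z)` is well defined (all
denominator factors are nonzero) and `|σ⁺₀(n,z)/σ⁺₀(n,0) - 1| ≤ C (log m)/m`. -/
theorem stmt11 (a A b B : ℂ) (ha : a ≠ 0) (hA : A ≠ 0) (hb : b ≠ 0) (hB : B ≠ 0)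
    (K : ℝ) (hK : 0 < K) :
    ∃ C > (0 : ℝ), ∃ m₀ : ℕ, ∀ m : ℕ, m₀ ≤ m → ∀ n : ℤ,
      (n = 2 * m + 1 ∨ n = -(2 * m + 1)) → ∀ z : ℂ, ‖z‖ ≤ K / (m : ℝ) →
        (∀ x ∈ Xw n 0, denX n x z ≠ 0) ∧
        ‖sigmaX a A b B n 0 z / sigmaX a A b B n 0 0 - 1‖
          ≤ C * Real.log m / (m : ℝ) := by
  obtain ⟨C, hC, m₀, hm₀3, hmain⟩ := main_est K hK
  refine ⟨C, hC, m₀, ?_⟩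
  intro m hm n hn z hz
  -- set up the walk and factor data
  set e : ℤ := if 0 < n then 2 else -2 with he
  have hepm : e = 2 ∨ e = -2 := by by_cases h : 0 < n <;> simp [he, h]
  set x₀ : List ℤ := List.replicate (2*m+1) e with hx₀
  have hXw : Xw n 0 = {x₀} := by
    rcases hn with hn | hn
    · have : e = 2 := by rw [he, if_pos (by omega)]
      rw [hx₀, this]; exact Xw_pos m n hn
    · have : e = -2 := by rw [he, if_neg (by omega)]
      rw [hx₀, this]; exact Xw_neg m n hn
  -- the |cfac| values
  have hcfac : ∀ k ∈ Finset.Icc 1 (2*m),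
      (|cfac n e k| : ℤ) = 2*k ∨ (|cfac n e k| : ℤ) = 2*(2*(m:ℤ)+1) - 2*k := by
    intro k hk
    simp only [Finset.mem_Icc] at hk
    rcases hn with hn | hn
    · have he2 : e = 2 := by rw [he, if_pos (by omega)]
      rw [cfac, he2, hn]
      rcases Nat.even_or_odd k with hp | hp
      · have h2 : k % 2 = 0 := Nat.even_iff.mp hp
        rw [if_neg (by omega)]; left
        rw [abs_of_nonneg (by positivity)]; ring
      · have h2 : k % 2 = 1 := Nat.odd_iff.mp hp
        rw [if_pos h2]; right
        rw [abs_of_nonneg (by omega)]; ring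
    · have he2 : e = -2 := by rw [he, if_neg (by omega)]
      rw [cfac, he2, hn]
      rcases Nat.even_or_odd k with hp | hp
      · have h2 : k % 2 = 0 := Nat.even_iff.mp hp
        rw [if_neg (by omega)]; left
        rw [abs_of_nonpos (by omega)]; ring
      · have h2 : k % 2 = 1 := Nat.odd_iff.mp hp
        rw [if_pos h2]; right
        rw [abs_of_nonpos (by omega)]; ring
  obtain ⟨hne, hbound⟩ := hmain m hm (cfac n e) hcfac z hz
  have hz0 : ‖(0:ℂ)‖ ≤ K / m := by
    rw [norm_zero]
    have : (0:ℝ) < m := by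
      have : 3 ≤ m := le_trans hm₀3 hm
      positivity
    positivity
  obtain ⟨hne0, -⟩ := hmain m hm (cfac n e) hcfac 0 hz0
  -- identify denX / numX / sigmaX
  have hden_z : denX n x₀ z = ∏ k ∈ Finset.Icc 1 (2*m), ((cfac n e k : ℂ) + z) :=
    denX_replicate n m e z
  have hden_0 : denX n x₀ 0 = ∏ k ∈ Finset.Icc 1 (2*m), ((cfac n e k : ℂ)) := by
    rw [denX_replicate n m e 0]
    exact Finset.prod_congr rfl fun k _ => by ring
  have hDz : denX n x₀ z ≠ 0 := by
    rw [hden_z]; exact Finset.prod_ne_zero_iff.mpr hne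
  have hD0 : denX n x₀ 0 ≠ 0 := by
    rw [hden_0]
    refine Finset.prod_ne_zero_iff.mpr fun k hk => ?_
    have := hne0 k hk
    simpa using this
  have hN : numX a A b B x₀ ≠ 0 := numX_replicate_ne a A b B ha hA hb hB _ e hepm
  have hsig : ∀ y : ℂ, sigmaX a A b B n 0 y = numX a A b B x₀ / denX n x₀ y := by
    intro y
    rw [sigmaX, hXw]
    rw [tsum_singleton x₀ (fun x => hX a A b B n x y)]
    rfl
  constructor
  · intro x hx
    rw [hXw, Set.mem_singleton_iff] at hx
    rw [hx]; exact hDz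
  · have hratio : sigmaX a A b B n 0 z / sigmaX a A b B n 0 0
        = denX n x₀ 0 / denX n x₀ z := by
      rw [hsig z, hsig 0]
      field_simp
    rw [hratio, hden_z, hden_0]
    exact hbound
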